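/- arXiv:1406.3215 — 2 statements merged into one kernel-verified Lean document; each statement's English description precedes it below -/
import Mathlib

section
/- Let (X,d) be a complete metric space that is strictly ∞-convex and nearly uniformly convex. Then every pair x,y ∈ X has a unique midpoint m(x,y), and the midpoint map m : X × X → X is continuous. -/
open Filter Topology Metric Set MeasureTheory
open scoped ENNReal

section Defs

variable (X : Type) [MetricSpace X]

/-- `m` is a midpoint of `x` and `y`. -/
def IsMidpoint {X : Type} [MetricSpace X] (x y m : X) : Prop :=
  dist x m = dist x y / 2 ∧ dist y m = dist x y / 2

/-- `(X,d)` admits midpoints. -/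
def AdmitsMidpoints : Prop := ∀ x y : X, ∃ m, IsMidpoint x y m

/-- The `p`-mean of two nonnegative reals, `p ∈ [1,∞]`. -/
noncomputable def pMean (p : ℝ≥0∞) (a b : ℝ) : ℝ :=
  if p = ∞ then max a b else ((a ^ p.toReal + b ^ p.toReal) / 2) ^ (1 / p.toReal)

/-- `p`-convexity. -/
def PConvex (p : ℝ≥0∞) : Prop :=
  AdmitsMidpoints X ∧ ∀ x y z m : X, IsMidpoint x y m →
    dist m z ≤ pMean p (dist x z) (dist y z)

/-- strict `p`-convexity. -/
def StrictlyPConvex (p : ℝ≥0∞) : Prop :=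
  AdmitsMidpoints X ∧ ∀ x y z m : X, IsMidpoint x y m →
    (if p = 1 then |dist x z - dist y z| < dist x y else x ≠ y) →
    dist m z < pMean p (dist x z) (dist y z)

/-- uniform `p`-convexity. -/
def UniformlyPConvex (p : ℝ≥0∞) : Prop :=
  AdmitsMidpoints X ∧ ∀ ε : ℝ, 0 < ε → ∃ ρ : ℝ, ρ ∈ Set.Ioo (0:ℝ) 1 ∧
    ∀ x y z m : X, IsMidpoint x y m →
      (if p = 1 then |dist x z - dist y z| + ε * pMean 1 (dist x z) (dist y z) < dist x y
        else ε * pMean p (dist x z) (dist y z) < dist x y) →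
      dist m z ≤ (1 - ρ) * pMean p (dist x z) (dist y z)

/-- Busemann non-positive curvature condition. -/
def Busemann : Prop :=
  AdmitsMidpoints X ∧ ∀ x₀ x₁ y₀ y₁ xm ym : X,
    IsMidpoint x₀ x₁ xm → IsMidpoint y₀ y₁ ym →
      dist xm ym ≤ (dist x₀ y₀ + dist x₁ y₁) / 2

/-- `γ` (restricted to `[0,1]`) is a geodesic from `x` to `y`. -/
def IsGeodesic {X : Type} [MetricSpace X] (γ : ℝ → X) (x y : X) : Prop :=
  γ 0 = x ∧ γ 1 = y ∧ ∀ s ∈ Set.Icc (0:ℝ) 1, ∀ t ∈ Set.Icc (0:ℝ) 1,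
    dist (γ s) (γ t) = |s - t| * dist x y

/-- A subset is (geodesically) convex if it contains all geodesics between its points. -/
def GConvex {X : Type} [MetricSpace X] (C : Set X) : Prop :=
  ∀ x ∈ C, ∀ y ∈ C, ∀ γ : ℝ → X, IsGeodesic γ x y → ∀ t ∈ Set.Icc (0:ℝ) 1, γ t ∈ C

/-- The convex hull: the smallest convex set containing `A`. -/
def gConvexHull {X : Type} [MetricSpace X] (A : Set X) : Set X :=
  ⋂₀ {C : Set X | GConvex C ∧ A ⊆ C}

/-- `∞`-convexity. -/
def InftyConvex : Prop :=
  AdmitsMidpoints X ∧ ∀ x y z m : X, IsMidpoint x y m →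
    dist m z ≤ max (dist x z) (dist y z)

/-- strict `∞`-convexity. -/
def StrictlyInftyConvex : Prop :=
  AdmitsMidpoints X ∧ ∀ x y z m : X, IsMidpoint x y m → x ≠ y →
    dist m z < max (dist x z) (dist y z)

/-- uniform `∞`-convexity. -/
def UniformlyInftyConvex : Prop :=
  AdmitsMidpoints X ∧ ∀ ε : ℝ, 0 < ε → ∃ ρ : ℝ, ρ ∈ Set.Ioo (0:ℝ) 1 ∧
    ∀ x y z m : X, IsMidpoint x y m →
      ε * max (dist x z) (dist y z) < dist x y →
      dist m z ≤ (1 - ρ) * max (dist x z) (dist y z)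

/-- `ρ` works as a modulus of nearly uniform convexity for the parameters `ε`, `R`:
for every infinite `ε`-separated family in a ball of radius `r ≤ R` around `y`, the ball
`B_{(1-ρ)r}(y)` intersects the closed convex hull of the family. -/
def NUCModulus (ε R ρ : ℝ) : Prop :=
  ∀ (ι : Type) [Infinite ι], ∀ (x : ι → X) (y : X) (r : ℝ), r ≤ R →
    (∀ i j : ι, i ≠ j → ε ≤ dist (x i) (x j)) → (∀ i, dist (x i) y ≤ r) →
    (Metric.closedBall y ((1 - ρ) * r) ∩ closure (gConvexHull (Set.range x))).Nonempty

/-- Nearly uniform convexity. -/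
def NearlyUniformlyConvex : Prop :=
  InftyConvex X ∧ ∀ R : ℝ, 0 < R → ∀ ε : ℝ, 0 < ε → ∃ ρ : ℝ, 0 < ρ ∧ NUCModulus X ε R ρ

/-- Reflexivity: every decreasing directed family of nonempty bounded closed convex sets
has nonempty intersection. -/
def MetricReflexive : Prop :=
  ∀ (I : Type) [Nonempty I] [Preorder I] [IsDirected I (· ≤ ·)], ∀ C : I → Set X,
    (∀ i, (C i).Nonempty) → (∀ i, Bornology.IsBounded (C i)) → (∀ i, IsClosed (C i)) →
    (∀ i, GConvex (C i)) → (∀ i j : I, j ≤ i → C i ⊆ C j) → (⋂ i, C i).Nonempty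

/-- The co-convex topology: the weakest topology containing all complements of closed
convex sets. -/
def coConvexTopology : TopologicalSpace X :=
  TopologicalSpace.generateFrom {U : Set X | ∃ C : Set X, IsClosed C ∧ GConvex C ∧ U = Cᶜ}

/-- The set of limit points of the sequence `x` in the co-convex topology. -/
def coLim {X : Type} [MetricSpace X] (x : ℕ → X) : Set X :=
  {a : X | Filter.Tendsto x Filter.atTop (@nhds X (coConvexTopology X) a)}

/-- Countable reflexivity. -/
def CountableReflexive : Prop :=
  MetricReflexive X ∧ ∀ x : ℕ → X, (coLim x).Nonempty →
    ∃ φ : ℕ → ℕ, StrictMono φ ∧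
      coLim x = ⋂ m : ℕ, closure (gConvexHull ((fun n => x (φ n)) '' Set.Ici m))

/-- Quasi-convexity: all sublevel sets are convex. -/
def GQuasiConvex {X : Type} [MetricSpace X] (f : X → ℝ) : Prop :=
  ∀ c : ℝ, GConvex {x : X | f x ≤ c}

/-- Quasi-monotonicity: both quasi-convex and quasi-concave. -/
def GQuasiMonotone {X : Type} [MetricSpace X] (f : X → ℝ) : Prop :=
  GQuasiConvex f ∧ GQuasiConvex (fun x => -f x)

/-- The `p`-mean for real `p ∈ [1,∞)`. -/
noncomputable def pMeanR (p a b : ℝ) : ℝ := ((a ^ p + b ^ p) / 2) ^ (1 / p)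

/-- `p`-convexity for real `p`. -/
def PConvexR (p : ℝ) : Prop :=
  AdmitsMidpoints X ∧ ∀ x y z m : X, IsMidpoint x y m →
    dist m z ≤ pMeanR p (dist x z) (dist y z)

/-- strict `p`-convexity for real `p`. -/
def StrictlyPConvexR (p : ℝ) : Prop :=
  AdmitsMidpoints X ∧ ∀ x y z m : X, IsMidpoint x y m →
    (if p = 1 then |dist x z - dist y z| < dist x y else x ≠ y) →
    dist m z < pMeanR p (dist x z) (dist y z)

/-- uniform `p`-convexity for real `p`. -/
def UniformlyPConvexR (p : ℝ) : Prop :=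
  AdmitsMidpoints X ∧ ∀ ε : ℝ, 0 < ε → ∃ ρ : ℝ, ρ ∈ Set.Ioo (0:ℝ) 1 ∧
    ∀ x y z m : X, IsMidpoint x y m →
      ε * pMeanR p (dist x z) (dist y z) < dist x y →
      dist m z ≤ (1 - ρ) * pMeanR p (dist x z) (dist y z)

/-- `ω(z,(x_n)) = limsup_n d(z,x_n)`. -/
noncomputable def asymRadius {X : Type} [MetricSpace X] (x : ℕ → X) (z : X) : ℝ :=
  Filter.limsup (fun n => dist z (x n)) Filter.atTop

/-- `a` is the (unique) asymptotic center of the sequence `x`. -/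
def IsAsymptoticCenter {X : Type} [MetricSpace X] (x : ℕ → X) (a : X) : Prop :=
  (∀ z : X, asymRadius x a ≤ asymRadius x z) ∧
  ∀ b : X, (∀ z : X, asymRadius x b ≤ asymRadius x z) → b = a

/-- Weak sequential convergence: `a` is the asymptotic center of every subsequence. -/
def WeakSeqConv {X : Type} [MetricSpace X] (x : ℕ → X) (a : X) : Prop :=
  ∀ φ : ℕ → ℕ, StrictMono φ → IsAsymptoticCenter (fun n => x (φ n)) a

end Defs
/-- Along a geodesic, distance to a point is bounded by the max of endpoint distances. -/
lemma aux_dist_geodesic_le {X : Type} [MetricSpace X] (h : InftyConvex X)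
    (γ : ℝ → X) (x y : X) (hγ : IsGeodesic γ x y) (z : X) :
    ∀ t ∈ Set.Icc (0:ℝ) 1, dist (γ t) z ≤ max (dist x z) (dist y z) := by
  obtain ⟨h0, h1g, hd⟩ := hγ
  set M := max (dist x z) (dist y z) with hM
  set d := dist x y with hdd
  have key : ∀ s ∈ Set.Icc (0:ℝ) 1, ∀ t ∈ Set.Icc (0:ℝ) 1,
      dist (γ s) z ≤ M → dist (γ t) z ≤ M → dist (γ ((s+t)/2)) z ≤ M := by
    intro s hs t ht hsz htz
    have hmem : (s+t)/2 ∈ Set.Icc (0:ℝ) 1 := by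
      constructor <;> [skip; skip] <;> · simp only [Set.mem_Icc] at hs ht; nlinarith [hs.1, hs.2, ht.1, ht.2]
    have hmid : IsMidpoint (γ s) (γ t) (γ ((s+t)/2)) := by
      constructor
      · rw [hd s hs ((s+t)/2) hmem, hd s hs t ht]
        rw [show s - (s+t)/2 = (s-t)/2 by ring, abs_div]
        simp [abs_of_nonneg]; ring
      · rw [hd t ht ((s+t)/2) hmem, hd s hs t ht]
        rw [show t - (s+t)/2 = (t-s)/2 by ring, abs_div, abs_sub_comm t s]
        simp [abs_of_nonneg]; ring
    calc dist (γ ((s+t)/2)) z ≤ max (dist (γ s) z) (dist (γ t) z) := h.2 _ _ _ _ hmid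
      _ ≤ M := max_le hsz htz
  have dyadic : ∀ n k : ℕ, k ≤ 2^n → dist (γ ((k:ℝ)/2^n)) z ≤ M := by
    intro n
    induction n with
    | zero =>
      intro k hk
      interval_cases k
      · simp only [Nat.cast_zero, pow_zero, zero_div]
        rw [h0]; exact le_max_left _ _
      · simp only [Nat.cast_one, pow_zero, div_one]
        rw [h1g]; exact le_max_right _ _
    | succ n ih =>
      intro k hk
      rcases Nat.even_or_odd k with ⟨j, hj⟩ | ⟨j, hj⟩
      · have hj' : j ≤ 2^n := by omega
        have : (k:ℝ)/2^(n+1) = (j:ℝ)/2^n := by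
          subst hj; push_cast; ring
        rw [this]; exact ih j hj'
      · have hj1 : j + 1 ≤ 2^n := by
          subst hj
          have : 2^(n+1) = 2 * 2^n := by ring
          omega
        have hj' : j ≤ 2^n := by omega
        have heq : (k:ℝ)/2^(n+1) = ((j:ℝ)/2^n + ((j:ℝ)+1)/2^n)/2 := by
          subst hj; push_cast; ring
        have hmem1 : (j:ℝ)/2^n ∈ Set.Icc (0:ℝ) 1 := by
          constructor
          · positivity
          · rw [div_le_one (by positivity)]
            exact_mod_cast hj'
        have hmem2 : ((j:ℝ)+1)/2^n ∈ Set.Icc (0:ℝ) 1 := by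
          constructor
          · positivity
          · rw [div_le_one (by positivity)]
            exact_mod_cast hj1
        rw [heq]
        refine key _ hmem1 _ hmem2 (ih j hj') ?_
        have := ih (j+1) hj1
        push_cast at this ⊢
        exact this
  -- now density
  intro t ht
  have hd0 : 0 ≤ d := dist_nonneg
  have hbound : ∀ n : ℕ, dist (γ t) z ≤ d * (1/2)^n + M := by
    intro n
    set k : ℕ := Nat.floor (t * 2^n) with hk
    have ht2 : 0 ≤ t * 2^n := by
      have := ht.1; positivity
    have hfl : (k:ℝ) ≤ t * 2^n := Nat.floor_le ht2
    have hfl2 : t * 2^n < (k:ℝ) + 1 := Nat.lt_floor_add_one _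
    have hkle : k ≤ 2^n := by
      have h2 : t * 2^n ≤ ((2^n : ℕ) : ℝ) := by
        push_cast
        have := ht.2; nlinarith [pow_pos (by norm_num : (0:ℝ) < 2) n]
      have := Nat.floor_le_of_le h2
      simpa using this
    have hmem : (k:ℝ)/2^n ∈ Set.Icc (0:ℝ) 1 := by
      constructor
      · positivity
      · rw [div_le_one (by positivity)]; exact_mod_cast hkle
    have hdist : dist (γ t) (γ ((k:ℝ)/2^n)) = |t - (k:ℝ)/2^n| * d :=
      hd t ht ((k:ℝ)/2^n) hmem
    have h2n : (0:ℝ) < 2^n := by positivity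
    have h12 : ((1:ℝ)/2)^n = 1/2^n := by rw [div_pow, one_pow]
    have habs : |t - (k:ℝ)/2^n| ≤ (1/2)^n := by
      rw [abs_le, h12]
      have hle : (k:ℝ)/2^n ≤ t := by rw [div_le_iff₀ h2n]; linarith
      have hle2 : t ≤ ((k:ℝ)+1)/2^n := by rw [le_div_iff₀ h2n]; linarith
      constructor
      · have : (0:ℝ) < 1/2^n := by positivity
        linarith
      · have : ((k:ℝ)+1)/2^n - (k:ℝ)/2^n = 1/2^n := by field_simp; ring
        linarith
    calc dist (γ t) z ≤ dist (γ t) (γ ((k:ℝ)/2^n)) + dist (γ ((k:ℝ)/2^n)) z := dist_triangle _ _ _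
      _ ≤ (1/2)^n * d + M := by
          rw [hdist]
          exact add_le_add (mul_le_mul_of_nonneg_right habs hd0) (dyadic n k hkle)
      _ = d * (1/2)^n + M := by ring
  have htend : Tendsto (fun n : ℕ => d * (1/2)^n + M) atTop (𝓝 M) := by
    have h1 : Tendsto (fun n : ℕ => ((1:ℝ)/2)^n) atTop (𝓝 0) :=
      tendsto_pow_atTop_nhds_zero_of_lt_one (by norm_num) (by norm_num)
    have h2 := (h1.const_mul d).add (tendsto_const_nhds (x := M))
    simpa using h2
  exact ge_of_tendsto' htend hbound


/-- Closed balls are geodesically convex in an `∞`-convex space. -/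
lemma aux_gconvex_closedBall {X : Type} [MetricSpace X] (h : InftyConvex X)
    (c : X) (r : ℝ) : GConvex (Metric.closedBall c r) := by
  intro p hp q hq γ hγ t ht
  have := aux_dist_geodesic_le h γ p q hγ c t ht
  simp only [Metric.mem_closedBall] at hp hq ⊢
  exact this.trans (max_le hp hq)

/-- The convex hull of a set contained in a convex set is contained in it. -/
lemma aux_hull_subset {X : Type} [MetricSpace X] {A C : Set X} (hC : GConvex C)
    (hAC : A ⊆ C) : gConvexHull A ⊆ C :=
  Set.sInter_subset_of_mem ⟨hC, hAC⟩

/-- Uniqueness of midpoints under strict `∞`-convexity. -/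
lemma aux_mid_unique {X : Type} [MetricSpace X] (h1 : StrictlyInftyConvex X)
    {x y m₁ m₂ : X} (hm₁ : IsMidpoint x y m₁) (hm₂ : IsMidpoint x y m₂) : m₁ = m₂ := by
  by_contra hne
  obtain ⟨m, hm⟩ := h1.1 m₁ m₂
  have hx := h1.2 m₁ m₂ x m hm hne
  have hy := h1.2 m₁ m₂ y m hm hne
  rw [dist_comm m₁ x, dist_comm m₂ x, hm₁.1, hm₂.1, max_self] at hx
  rw [dist_comm m₁ y, dist_comm m₂ y, hm₁.2, hm₂.2, max_self] at hy
  have htri := dist_triangle x m y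
  rw [dist_comm x m] at htri
  linarith

/-- Core convergence lemma: almost-midpoint sequences converge to the midpoint. -/
lemma aux_core {X : Type} [MetricSpace X] [CompleteSpace X]
    (h1 : StrictlyInftyConvex X) (h2 : NearlyUniformlyConvex X)
    (x y mid : X) (hmid : IsMidpoint x y mid) (z : ℕ → X)
    (hz : ∀ δ : ℝ, 0 < δ → ∀ᶠ n in atTop,
      dist (z n) x ≤ dist x y / 2 + δ ∧ dist (z n) y ≤ dist x y / 2 + δ) :
    Tendsto z atTop (𝓝 mid) := by
  set d := dist x y with hdd
  have hd0 : 0 ≤ d := dist_nonneg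
  rcases eq_or_lt_of_le hd0 with hd | hd
  · -- d = 0 : mid = x and z n → x
    have hmx : mid = x := by
      have hthis := hmid.1
      rw [← hdd, ← hd] at hthis
      simp only [zero_div] at hthis
      exact (dist_eq_zero.mp hthis).symm
    rw [hmx]
    rw [Metric.tendsto_atTop]
    intro ε hε
    obtain ⟨N, hN⟩ := (hz (ε/2) (by linarith)).exists_forall_of_atTop
    exact ⟨N, fun n hn => by have := (hN n hn).1; rw [← hd] at this; simp at this; linarith⟩
  · -- d > 0
    by_contra hcon
    rw [Metric.tendsto_atTop] at hcon
    push_neg at hcon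
    obtain ⟨ε₀, hε₀, hfreq⟩ := hcon
    have hfreq' : ∃ᶠ n in atTop, ε₀ ≤ dist (z n) mid := by
      rw [frequently_atTop]
      intro N; obtain ⟨n, hn, hd⟩ := hfreq N; exact ⟨n, hn, hd⟩
    obtain ⟨φ, hφ, hφd⟩ := Filter.extraction_of_frequently_atTop hfreq'
    set w : ℕ → X := z ∘ φ with hw
    have hzw : ∀ δ : ℝ, 0 < δ → ∀ᶠ n in atTop,
        dist (w n) x ≤ d / 2 + δ ∧ dist (w n) y ≤ d / 2 + δ := by
      intro δ hδ
      obtain ⟨N, hN⟩ := (hz δ hδ).exists_forall_of_atTop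
      rw [eventually_atTop]
      exact ⟨N, fun n hn => hN (φ n) (hn.trans (hφ.id_le n))⟩
    by_cases hTB : TotallyBounded (Set.range w)
    · -- totally bounded case
      have hcpt : IsCompact (closure (Set.range w)) :=
        TotallyBounded.isCompact_of_isClosed hTB.closure isClosed_closure
      obtain ⟨a, _, ψ, hψ, hψt⟩ := hcpt.tendsto_subseq
        (fun n => subset_closure (Set.mem_range_self n))
      have hax : dist a x ≤ d / 2 := by
        apply le_of_forall_pos_le_add
        intro δ hδ
        have hev : ∀ᶠ n in atTop, dist (w (ψ n)) x ≤ d / 2 + δ := by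
          obtain ⟨N, hN⟩ := (hzw δ hδ).exists_forall_of_atTop
          rw [eventually_atTop]
          exact ⟨N, fun n hn => (hN (ψ n) (hn.trans (hψ.id_le n))).1⟩
        exact le_of_tendsto (hψt.dist (tendsto_const_nhds (x := x))) hev
      have hay : dist a y ≤ d / 2 := by
        apply le_of_forall_pos_le_add
        intro δ hδ
        have hev : ∀ᶠ n in atTop, dist (w (ψ n)) y ≤ d / 2 + δ := by
          obtain ⟨N, hN⟩ := (hzw δ hδ).exists_forall_of_atTop
          rw [eventually_atTop]
          exact ⟨N, fun n hn => (hN (ψ n) (hn.trans (hψ.id_le n))).2⟩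
        exact le_of_tendsto (hψt.dist (tendsto_const_nhds (x := y))) hev
      have htri : d ≤ dist x a + dist a y := dist_triangle x a y
      rw [dist_comm x a] at htri
      have ham : IsMidpoint x y a := by
        constructor
        · rw [dist_comm x a]; linarith
        · rw [dist_comm y a]; linarith
      have : a = mid := aux_mid_unique h1 ham hmid
      subst this
      have heps : ε₀ ≤ 0 := by
        have h0 : Tendsto (fun n => dist (w (ψ n)) a) atTop (𝓝 0) := by
          have := hψt.dist (tendsto_const_nhds (x := a))
          simpa using this
        exact ge_of_tendsto h0 (Eventually.of_forall fun n => hφd (ψ n))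
      linarith
    · -- not totally bounded
      rw [Metric.totallyBounded_iff] at hTB
      push_neg at hTB
      obtain ⟨ε, hε, hsep⟩ := hTB
      obtain ⟨ρ, hρ, hNUC⟩ := h2.2 (d / 2 + 1) (by linarith) ε hε
      set δ' : ℝ := min 1 (ρ * d / 8) with hδ'
      have hδ'0 : 0 < δ' := by
        apply lt_min one_pos
        positivity
      have hδ'1 : δ' ≤ 1 := min_le_left _ _
      have hδ'2 : δ' ≤ ρ * d / 8 := min_le_right _ _
      set r : ℝ := d / 2 + δ' with hr
      obtain ⟨N, hN⟩ := (hzw δ' hδ'0).exists_forall_of_atTop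
      set S : Set X := w '' (Set.Ici N) with hS
      -- S is not coverable by finitely many ε-balls around any finite set
      have hSsep : ∀ s : Finset X, (∀ p ∈ s, p ∈ S) → ∃ p, p ∈ S ∧ ∀ q ∈ s, ε ≤ dist q p := by
        intro s _
        have hfin : (↑s ∪ w '' (Set.Iio N) : Set X).Finite :=
          (s.finite_toSet).union ((Set.finite_Iio N).image w)
        have := hsep _ hfin
        rw [Set.not_subset] at this
        obtain ⟨p, hpr, hpn⟩ := this
        have hpball : ∀ q ∈ (↑s ∪ w '' (Set.Iio N) : Set X), ε ≤ dist p q := by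
          intro q hq
          by_contra hlt
          push_neg at hlt
          exact hpn (Set.mem_biUnion hq (Metric.mem_ball.mpr hlt))
        have hpS : p ∈ S := by
          obtain ⟨n, hn⟩ := hpr
          rcases lt_or_ge n N with h | h
          · exfalso
            have := hpball (w n) (Set.mem_union_right _ ⟨n, h, rfl⟩)
            rw [hn] at this
            simp at this
            linarith
          · exact ⟨n, h, hn⟩
        exact ⟨p, hpS, fun q hq => by
          rw [dist_comm]; exact hpball q (Set.mem_union_left _ hq)⟩
      haveI : Std.Symm (fun p q : X => ε ≤ dist p q) := ⟨fun a b hab => by rwa [dist_comm]⟩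
      obtain ⟨u, huS, husep⟩ := exists_seq_of_forall_finset_exists'
        (fun p => p ∈ S) (fun p q => ε ≤ dist p q) hSsep
      have huxr : ∀ i, dist (u i) x ≤ r := by
        intro i
        obtain ⟨n, hn, he⟩ := huS i
        rw [← he]; exact (hN n hn).1
      have huyr : ∀ i, dist (u i) y ≤ r := by
        intro i
        obtain ⟨n, hn, he⟩ := huS i
        rw [← he]; exact (hN n hn).2
      have hsep' : ∀ i j : ℕ, i ≠ j → ε ≤ dist (u i) (u j) := fun i j hij => husep hij
      obtain ⟨z₀, hz₀b, hz₀h⟩ := hNUC ℕ u x r (by rw [hr]; linarith) hsep' huxr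
      have hz₀x : dist z₀ x ≤ (1 - ρ) * r := Metric.mem_closedBall.mp hz₀b
      have hz₀y : dist z₀ y ≤ r := by
        have hsub : closure (gConvexHull (Set.range u)) ⊆ Metric.closedBall y r := by
          apply closure_minimal _ Metric.isClosed_closedBall
          apply aux_hull_subset (aux_gconvex_closedBall h2.1 y r)
          rintro p ⟨i, rfl⟩
          exact Metric.mem_closedBall.mpr (huyr i)
        exact Metric.mem_closedBall.mp (hsub hz₀h)
      have htri : d ≤ dist x z₀ + dist z₀ y := dist_triangle x z₀ y
      rw [dist_comm x z₀] at htri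
      have hρd : 0 < ρ := hρ
      have hpr : ρ * r = ρ * d / 2 + ρ * δ' := by rw [hr]; ring
      clear_value d δ' r
      linarith [hpr, mul_pos hρd hδ'0, mul_pos hρd hd, hδ'2, htri, hz₀x, hz₀y, hr]

/-- In a complete, strictly `∞`-convex, nearly uniformly convex space,
midpoints are unique and the midpoint map is continuous. -/
theorem midpoint_unique_continuous (X : Type) [MetricSpace X] [CompleteSpace X]
    (h1 : StrictlyInftyConvex X) (h2 : NearlyUniformlyConvex X) :
    (∀ x y : X, ∃! m : X, IsMidpoint x y m) ∧
    ∀ m : X × X → X, (∀ x y : X, IsMidpoint x y (m (x, y))) → Continuous m := by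
  constructor
  · intro x y
    obtain ⟨mm, hmm⟩ := h1.1 x y
    exact ⟨mm, hmm, fun m' hm' => aux_mid_unique h1 hm' hmm⟩
  · intro m hm
    apply SeqContinuous.continuous
    intro p q hp
    have h1t : Tendsto (fun n => (p n).1) atTop (𝓝 q.1) :=
      (continuous_fst.tendsto q).comp hp
    have h2t : Tendsto (fun n => (p n).2) atTop (𝓝 q.2) :=
      (continuous_snd.tendsto q).comp hp
    have hmeta : ∀ r : X × X, m r = m (r.1, r.2) := fun r => by rw [Prod.mk.eta]
    have hmidq : IsMidpoint q.1 q.2 (m q) := by rw [hmeta q]; exact hm q.1 q.2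
    apply aux_core h1 h2 q.1 q.2 (m q) hmidq
    intro δ hδ
    have hdd : Tendsto (fun n => dist (p n).1 (p n).2) atTop (𝓝 (dist q.1 q.2)) :=
      h1t.dist h2t
    have hd1 : Tendsto (fun n => dist (p n).1 q.1) atTop (𝓝 0) := by
      have := h1t.dist (tendsto_const_nhds (x := q.1))
      simpa using this
    have hd2 : Tendsto (fun n => dist (p n).2 q.2) atTop (𝓝 0) := by
      have := h2t.dist (tendsto_const_nhds (x := q.2))
      simpa using this
    have hlim : Tendsto
        (fun n => dist (p n).1 (p n).2 / 2 + (dist (p n).1 q.1 + dist (p n).2 q.2))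
        atTop (𝓝 (dist q.1 q.2 / 2)) := by
      have := (hdd.div_const 2).add (hd1.add hd2)
      simpa using this
    have hev : ∀ᶠ n in atTop,
        dist (p n).1 (p n).2 / 2 + (dist (p n).1 q.1 + dist (p n).2 q.2)
          < dist q.1 q.2 / 2 + δ :=
      hlim.eventually (gt_mem_nhds (by linarith))
    filter_upwards [hev] with n hn
    have hmn : IsMidpoint (p n).1 (p n).2 ((m ∘ p) n) := by
      show IsMidpoint (p n).1 (p n).2 (m (p n))
      rw [hmeta (p n)]; exact hm (p n).1 (p n).2
    have hb1 : dist ((m ∘ p) n) q.1 ≤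
        dist (p n).1 (p n).2 / 2 + dist (p n).1 q.1 := by
      calc dist ((m ∘ p) n) q.1 ≤ dist ((m ∘ p) n) (p n).1 + dist (p n).1 q.1 :=
            dist_triangle _ _ _
        _ = dist (p n).1 (p n).2 / 2 + dist (p n).1 q.1 := by
            rw [dist_comm ((m ∘ p) n) (p n).1, hmn.1]
    have hb2 : dist ((m ∘ p) n) q.2 ≤
        dist (p n).1 (p n).2 / 2 + dist (p n).2 q.2 := by
      calc dist ((m ∘ p) n) q.2 ≤ dist ((m ∘ p) n) (p n).2 + dist (p n).2 q.2 :=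
            dist_triangle _ _ _
        _ = dist (p n).1 (p n).2 / 2 + dist (p n).2 q.2 := by
            rw [dist_comm ((m ∘ p) n) (p n).2, hmn.2]
    constructor
    · refine hb1.trans ?_
      have := dist_nonneg (x := (p n).2) (y := q.2)
      linarith
    · refine hb2.trans ?_
      have := dist_nonneg (x := (p n).1) (y := q.1)
      linarith
end

section
/- Every complete metric space that is strictly ∞-convex and nearly uniformly convex is contractible. -/
open Filter Topology Metric Set MeasureTheory
open scoped ENNReal

section AuxProof
set_option linter.unusedSectionVars false

variable {X : Type} [MetricSpace X]

/-- Dyadic approximation of the geodesic via iterated midpoints: `midSeq M n t a b` is the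
point at parameter `⌊t·2ⁿ⌋/2ⁿ` on the dyadic geodesic from `a` to `b`. -/
noncomputable def midSeq (M : X → X → X) : ℕ → ℝ → X → X → X
  | 0 => fun _ a _ => a
  | (n+1) => fun t a b =>
      if t < 1/2 then midSeq M n (2*t) a (M a b) else midSeq M n (2*t-1) (M a b) b

lemma midSeq_succ (M : X → X → X) (n : ℕ) (t : ℝ) (a b : X) :
    midSeq M (n+1) t a b =
      if t < 1/2 then midSeq M n (2*t) a (M a b) else midSeq M n (2*t-1) (M a b) b := rfl

variable {M : X → X → X} (hM : ∀ a b : X, IsMidpoint a b (M a b))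

include hM

lemma dist_left_mid (a b : X) : dist a (M a b) = dist a b / 2 := (hM a b).1
lemma dist_mid_right (a b : X) : dist (M a b) b = dist a b / 2 := by
  rw [dist_comm]; exact (hM a b).2

lemma midSeq_dist_left : ∀ (n : ℕ) (t : ℝ) (a b : X), 0 ≤ t → t ≤ 1 →
    dist a (midSeq M n t a b) ≤ t * dist a b := by
  intro n
  induction n with
  | zero => intro t a b ht0 ht1; simp [midSeq]; positivity
  | succ n ih =>
    intro t a b ht0 ht1
    rw [midSeq_succ]
    split_ifs with h
    · calc dist a (midSeq M n (2*t) a (M a b)) ≤ (2*t) * dist a (M a b) :=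
            ih (2*t) a (M a b) (by linarith) (by linarith)
        _ = t * dist a b := by rw [dist_left_mid hM]; ring
    · calc dist a (midSeq M n (2*t-1) (M a b) b)
          ≤ dist a (M a b) + dist (M a b) (midSeq M n (2*t-1) (M a b) b) := dist_triangle _ _ _
        _ ≤ dist a b / 2 + (2*t-1) * dist (M a b) b := by
            rw [dist_left_mid hM]
            exact add_le_add le_rfl (ih (2*t-1) (M a b) b (by linarith [not_lt.1 h]) (by linarith))
        _ = t * dist a b := by rw [dist_mid_right hM]; ring

lemma midSeq_dist_right : ∀ (n : ℕ) (t : ℝ) (a b : X), 0 ≤ t → t ≤ 1 →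
    dist (midSeq M n t a b) b ≤ (1 - t + (1/2)^n) * dist a b := by
  intro n
  induction n with
  | zero =>
    intro t a b ht0 ht1
    simp only [midSeq, pow_zero]
    nlinarith [dist_nonneg (x := a) (y := b)]
  | succ n ih =>
    intro t a b ht0 ht1
    rw [midSeq_succ]
    split_ifs with h
    · calc dist (midSeq M n (2*t) a (M a b)) b
          ≤ dist (midSeq M n (2*t) a (M a b)) (M a b) + dist (M a b) b := dist_triangle _ _ _
        _ ≤ (1 - 2*t + (1/2)^n) * dist a (M a b) + dist a b / 2 := by
            rw [dist_mid_right hM]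
            exact add_le_add (ih (2*t) a (M a b) (by linarith) (by linarith)) le_rfl
        _ ≤ (1 - t + (1/2)^(n+1)) * dist a b := by
            rw [dist_left_mid hM]; ring_nf; nlinarith [dist_nonneg (x := a) (y := b)]
    · calc dist (midSeq M n (2*t-1) (M a b) b) b
          ≤ (1 - (2*t-1) + (1/2)^n) * dist (M a b) b :=
            ih (2*t-1) (M a b) b (by linarith [not_lt.1 h]) (by linarith)
        _ = (1 - t + (1/2)^(n+1)) * dist a b := by rw [dist_mid_right hM]; ring

lemma midSeq_dist_mono : ∀ (n : ℕ) (s t : ℝ) (a b : X), 0 ≤ s → s ≤ t → t ≤ 1 →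
    dist (midSeq M n s a b) (midSeq M n t a b) ≤ (t - s + (1/2)^n) * dist a b := by
  intro n
  induction n with
  | zero =>
    intro s t a b hs hst ht
    simp only [midSeq, dist_self, pow_zero]
    nlinarith [dist_nonneg (x := a) (y := b)]
  | succ n ih =>
    intro s t a b hs hst ht
    rw [midSeq_succ, midSeq_succ]
    split_ifs with h h'
    · calc dist (midSeq M n (2*s) a (M a b)) (midSeq M n (2*t) a (M a b))
          ≤ (2*t - 2*s + (1/2)^n) * dist a (M a b) :=
            ih (2*s) (2*t) a (M a b) (by linarith) (by linarith) (by linarith)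
        _ = (t - s + (1/2)^(n+1)) * dist a b := by rw [dist_left_mid hM]; ring
    · calc dist (midSeq M n (2*s) a (M a b)) (midSeq M n (2*t-1) (M a b) b)
          ≤ dist (midSeq M n (2*s) a (M a b)) (M a b)
            + dist (M a b) (midSeq M n (2*t-1) (M a b) b) := dist_triangle _ _ _
        _ ≤ (1 - 2*s + (1/2)^n) * dist a (M a b) + (2*t-1) * dist (M a b) b := by
            refine add_le_add ?_ ?_
            · exact midSeq_dist_right hM n (2*s) a (M a b) (by linarith) (by linarith)
            · exact midSeq_dist_left hM n (2*t-1) (M a b) b (by linarith [not_lt.1 h']) (by linarith)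
        _ = (t - s + (1/2)^(n+1)) * dist a b := by
            rw [dist_left_mid hM, dist_mid_right hM]; ring
    · linarith [not_lt.1 h]
    · calc dist (midSeq M n (2*s-1) (M a b) b) (midSeq M n (2*t-1) (M a b) b)
          ≤ ((2*t-1) - (2*s-1) + (1/2)^n) * dist (M a b) b :=
            ih (2*s-1) (2*t-1) (M a b) b (by linarith [not_lt.1 h]) (by linarith) (by linarith)
        _ = (t - s + (1/2)^(n+1)) * dist a b := by rw [dist_mid_right hM]; ring

lemma midSeq_dist_param (n : ℕ) (s t : ℝ) (a b : X) (hs0 : 0 ≤ s) (hs1 : s ≤ 1)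
    (ht0 : 0 ≤ t) (ht1 : t ≤ 1) :
    dist (midSeq M n s a b) (midSeq M n t a b) ≤ (|t - s| + (1/2)^n) * dist a b := by
  rcases le_total s t with h | h
  · rw [abs_of_nonneg (by linarith)]
    exact midSeq_dist_mono hM n s t a b hs0 h ht1
  · rw [abs_of_nonpos (by linarith), dist_comm]
    calc dist (midSeq M n t a b) (midSeq M n s a b) ≤ (s - t + (1/2)^n) * dist a b :=
          midSeq_dist_mono hM n t s a b ht0 h hs1
      _ = (-(t-s) + (1/2)^n) * dist a b := by ring

lemma midSeq_dist_step : ∀ (n : ℕ) (t : ℝ) (a b : X),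
    dist (midSeq M n t a b) (midSeq M (n+1) t a b) ≤ (1/2)^(n+1) * dist a b := by
  intro n
  induction n with
  | zero =>
    intro t a b
    rw [midSeq_succ]
    split_ifs with h
    · simp [midSeq]
    · simp only [midSeq]
      rw [dist_left_mid hM]
      norm_num
      linarith [dist_nonneg (x := a) (y := b)]
  | succ n ih =>
    intro t a b
    rw [midSeq_succ M (n+1), midSeq_succ M n]
    split_ifs with h
    · calc dist (midSeq M n (2*t) a (M a b)) (midSeq M (n+1) (2*t) a (M a b))
          ≤ (1/2)^(n+1) * dist a (M a b) := ih (2*t) a (M a b)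
        _ = (1/2)^(n+2) * dist a b := by rw [dist_left_mid hM]; ring
    · calc dist (midSeq M n (2*t-1) (M a b) b) (midSeq M (n+1) (2*t-1) (M a b) b)
          ≤ (1/2)^(n+1) * dist (M a b) b := ih (2*t-1) (M a b) b
        _ = (1/2)^(n+2) * dist a b := by rw [dist_mid_right hM]; ring

lemma midSeq_dist_of_le (t : ℝ) (a b : X) {n m : ℕ} (hnm : n ≤ m) :
    dist (midSeq M n t a b) (midSeq M m t a b) ≤ ((1/2)^n - (1/2)^m) * dist a b := by
  induction m, hnm using Nat.le_induction with
  | base => simp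
  | succ m hnm ih =>
    calc dist (midSeq M n t a b) (midSeq M (m+1) t a b)
        ≤ dist (midSeq M n t a b) (midSeq M m t a b)
          + dist (midSeq M m t a b) (midSeq M (m+1) t a b) := dist_triangle _ _ _
      _ ≤ ((1/2)^n - (1/2)^m) * dist a b + (1/2)^(m+1) * dist a b :=
          add_le_add ih (midSeq_dist_step hM m t a b)
      _ = ((1/2)^n - (1/2)^(m+1)) * dist a b := by ring

lemma midSeq_cauchy (t : ℝ) (a b : X) : CauchySeq (fun n => midSeq M n t a b) := by
  apply cauchySeq_of_le_geometric (1/2) (dist a b) (by norm_num)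
  intro n
  calc dist (midSeq M n t a b) (midSeq M (n+1) t a b) ≤ (1/2)^(n+1) * dist a b :=
        midSeq_dist_step hM n t a b
    _ ≤ dist a b * (1/2)^n := by
        rw [pow_succ]
        nlinarith [dist_nonneg (x := a) (y := b), pow_nonneg (by norm_num : (0:ℝ) ≤ 1/2) n]

lemma midSeq_param_zero : ∀ (n : ℕ) (a b : X), midSeq M n 0 a b = a := by
  intro n
  induction n with
  | zero => intro a b; rfl
  | succ n ih => intro a b; rw [midSeq_succ]; norm_num; exact ih a (M a b)

omit hM in
/-- In an `∞`-convex space, closed balls are geodesically convex. -/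
lemma gconvex_closedBall
    (hC : ∀ x y z m : X, IsMidpoint x y m → dist m z ≤ max (dist x z) (dist y z))
    (z : X) (r : ℝ) : GConvex (Metric.closedBall z r) := by
  intro x hx y hy γ hγ t ht
  obtain ⟨hγ0, hγ1, hγd⟩ := hγ
  rw [Metric.mem_closedBall] at hx hy ⊢
  -- dyadic points are in the ball
  have key : ∀ n : ℕ, ∀ k : ℕ, k ≤ 2^n → dist (γ ((k : ℝ) / 2^n)) z ≤ r := by
    intro n
    induction n with
    | zero =>
      intro k hk
      interval_cases k
      · simpa [hγ0] using hx
      · simpa [hγ1] using hy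
    | succ n ih =>
      intro k hk
      rcases Nat.even_or_odd k with ⟨j, hj⟩ | ⟨j, hj⟩
      · have hj2 : j ≤ 2^n := by omega
        have : ((k : ℝ) / 2^(n+1)) = (j : ℝ) / 2^n := by
          subst hj; push_cast; field_simp; ring
        rw [this]; exact ih j hj2
      · have hj2 : j + 1 ≤ 2^n := by omega
        set s : ℝ := (j : ℝ) / 2^n with hs
        set u : ℝ := ((j : ℝ) + 1) / 2^n with hu
        have h2n : (0:ℝ) < 2^n := by positivity
        have hs0 : 0 ≤ s := by positivity
        have hs1 : s ≤ 1 := by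
          rw [hs, div_le_one h2n]
          exact_mod_cast le_trans (by exact_mod_cast Nat.le_of_succ_le hj2) le_rfl
        have hu0 : 0 ≤ u := by positivity
        have hu1 : u ≤ 1 := by
          rw [hu, div_le_one h2n]; exact_mod_cast hj2
        have hsu : s ≤ u := by
          rw [hs, hu]
          gcongr
          linarith
        have hmid0 : (0:ℝ) ≤ (s+u)/2 := by linarith
        have hmid1 : (s+u)/2 ≤ 1 := by linarith
        have hd : dist (γ s) (γ u) = (u - s) * dist x y := by
          rw [hγd s ⟨hs0, hs1⟩ u ⟨hu0, hu1⟩, abs_of_nonpos (by linarith)]; ring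
        have hmid : IsMidpoint (γ s) (γ u) (γ ((s+u)/2)) := by
          constructor
          · rw [hγd s ⟨hs0, hs1⟩ ((s+u)/2) ⟨hmid0, hmid1⟩, hd,
              abs_of_nonpos (by linarith)]; ring
          · rw [hγd u ⟨hu0, hu1⟩ ((s+u)/2) ⟨hmid0, hmid1⟩, hd,
              abs_of_nonneg (by linarith)]; ring
        have hk' : ((k : ℝ) / 2^(n+1)) = (s+u)/2 := by
          subst hj; rw [hs, hu]; push_cast; field_simp; ring
        rw [hk']
        calc dist (γ ((s+u)/2)) z ≤ max (dist (γ s) z) (dist (γ u) z) := hC _ _ _ _ hmid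
          _ ≤ r := by
              have e1 := ih j (by omega)
              have e2 := ih (j+1) hj2
              rw [hs, hu]
              push_cast at e2 ⊢
              exact max_le e1 e2
  -- approximate t by dyadics
  obtain ⟨ht0, ht1⟩ := ht
  have main : ∀ ε > 0, dist (γ t) z ≤ r + ε := by
    intro ε hε
    have hd0 : (0:ℝ) ≤ dist x y := dist_nonneg
    obtain ⟨n, hn⟩ : ∃ n : ℕ, (1/2 : ℝ)^n * dist x y < ε := by
      obtain ⟨n, hn⟩ := exists_pow_lt_of_lt_one (show (0:ℝ) < ε / (dist x y + 1) by positivity)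
        (by norm_num : (1/2 : ℝ) < 1)
      refine ⟨n, ?_⟩
      have hlt := (lt_div_iff₀ (show (0:ℝ) < dist x y + 1 by linarith)).1 hn
      nlinarith [pow_nonneg (by norm_num : (0:ℝ) ≤ 1/2) n]
    set k : ℕ := ⌊t * 2^n⌋₊ with hk
    have h2n : (0:ℝ) < 2^n := by positivity
    have hk2 : k ≤ 2^n := by
      rw [hk]
      calc ⌊t * 2^n⌋₊ ≤ ⌊(2:ℝ)^n⌋₊ := Nat.floor_le_floor (by nlinarith)
        _ = 2^n := by
            rw [show ((2:ℝ)^n) = ((2^n : ℕ) : ℝ) by push_cast; ring, Nat.floor_natCast]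
    have hfl : (k : ℝ) ≤ t * 2^n := Nat.floor_le (by positivity)
    have hfl2 : t * 2^n < (k : ℝ) + 1 := Nat.lt_floor_add_one _
    have habs : |t - (k : ℝ)/2^n| ≤ 1/2^n := by
      have b1 : (k:ℝ)/2^n ≤ t := (div_le_iff₀ h2n).2 (by linarith)
      have b2 : t ≤ (k:ℝ)/2^n + 1/2^n := by
        have : t ≤ ((k:ℝ)+1)/2^n := (le_div_iff₀ h2n).2 (by linarith)
        rw [show ((k:ℝ)+1)/2^n = (k:ℝ)/2^n + 1/2^n by ring] at this
        exact this
      rw [abs_le]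
      constructor <;> linarith
    have hkIcc : ((k:ℝ)/2^n) ∈ Set.Icc (0:ℝ) 1 := ⟨by positivity, by
      rw [div_le_one h2n]; exact_mod_cast hk2⟩
    calc dist (γ t) z ≤ dist (γ t) (γ ((k:ℝ)/2^n)) + dist (γ ((k:ℝ)/2^n)) z :=
          dist_triangle _ _ _
      _ ≤ |t - (k:ℝ)/2^n| * dist x y + r := by
          rw [hγd t ⟨ht0, ht1⟩ ((k:ℝ)/2^n) hkIcc]
          exact add_le_add le_rfl (key n k hk2)
      _ ≤ (1/2)^n * dist x y + r := by
          refine add_le_add (mul_le_mul_of_nonneg_right ?_ hd0) le_rfl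
          calc |t - (k:ℝ)/2^n| ≤ 1/2^n := habs
            _ = (1/2)^n := by rw [div_pow, one_pow]
      _ ≤ r + ε := by linarith
  exact le_of_forall_pos_le_add main

omit hM in
lemma gConvexHull_subset {A C : Set X} (hGC : GConvex C) (hAC : A ⊆ C) : gConvexHull A ⊆ C :=
  fun _ hx => hx C ⟨hGC, hAC⟩

omit hM in
/-- Uniqueness of midpoints in a strictly `∞`-convex space. -/
lemma isMidpoint_unique (hAM : AdmitsMidpoints X)
    (hs : ∀ x y z m : X, IsMidpoint x y m → x ≠ y → dist m z < max (dist x z) (dist y z))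
    {x y m m' : X} (hm : IsMidpoint x y m) (hm' : IsMidpoint x y m') : m = m' := by
  by_contra hne
  obtain ⟨m'', hm''⟩ := hAM m m'
  have hx := hs m m' x m'' hm'' hne
  have hy := hs m m' y m'' hm'' hne
  rw [dist_comm m x, dist_comm m' x, hm.1, hm'.1, max_self] at hx
  rw [dist_comm m y, dist_comm m' y, hm.2, hm'.2, max_self] at hy
  have := dist_triangle x m'' y
  rw [dist_comm m'' x] at hx
  rw [dist_comm m'' y] at hy
  linarith [dist_comm y m'' ▸ hy]

omit hM in
/-- A sequence whose range is not totally bounded has a uniformly separated subsequence. -/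
lemma exists_separated_subseq (v : ℕ → X) (hnt : ¬ TotallyBounded (Set.range v)) :
    ∃ δ > 0, ∃ ψ : ℕ → ℕ, StrictMono ψ ∧
      ∀ i j, i ≠ j → δ ≤ dist (v (ψ i)) (v (ψ j)) := by
  rw [Metric.totallyBounded_iff] at hnt
  push_neg at hnt
  obtain ⟨ε, hε, hcov⟩ := hnt
  -- step: we can always find a later index far from any finite set of previous indices
  have step : ∀ (N : ℕ) (F : Finset ℕ), ∃ n, N < n ∧ ∀ i ∈ F, ε ≤ dist (v n) (v i) := by
    intro N F
    by_contra hcon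
    push_neg at hcon
    have := hcov ((v '' F) ∪ (v '' {i | i ≤ N}))
      (((F : Set ℕ).toFinite.image v).union ((Set.finite_Iic N).image v))
    apply this
    rintro _ ⟨n, rfl⟩
    by_cases hn : n ≤ N
    · exact Set.mem_biUnion (Set.mem_union_right _ ⟨n, hn, rfl⟩)
        (Metric.mem_ball_self hε)
    · obtain ⟨i, hiF, hi⟩ := hcon n (by omega)
      exact Set.mem_biUnion (Set.mem_union_left _ ⟨i, hiF, rfl⟩) (by rwa [Metric.mem_ball])
  choose g hg1 hg2 using step
  -- build the subsequence, carrying the history as a list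
  let L : ℕ → List ℕ := fun k => Nat.rec [g 0 ∅] (fun _ l => g l.headI l.toFinset :: l) k
  set ψ : ℕ → ℕ := fun k => (L k).headI with hψ
  have hLsucc : ∀ k, L (k+1) = g (ψ k) (L k).toFinset :: L k := fun k => rfl
  have hψsucc : ∀ k, ψ (k+1) = g (ψ k) (L k).toFinset := fun k => rfl
  have hmem : ∀ i k, i ≤ k → ψ i ∈ L k := by
    intro i k
    induction k with
    | zero => intro hi; interval_cases i; exact List.head!_mem_self (by simp [L])
    | succ k ih =>
      intro hi
      rcases Nat.lt_or_ge i (k+1) with h | h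
      · rw [hLsucc]; exact List.mem_cons_of_mem _ (ih (by omega))
      · have : i = k + 1 := by omega
        subst this
        rw [hψsucc, hLsucc]
        exact List.mem_cons_self
  have hmono : StrictMono ψ := by
    apply strictMono_nat_of_lt_succ
    intro k
    rw [hψsucc]
    exact (hg1 (ψ k) (L k).toFinset)
  have hsep : ∀ i j, i < j → ε ≤ dist (v (ψ j)) (v (ψ i)) := by
    intro i j hij
    obtain ⟨j', rfl⟩ : ∃ j', j = j' + 1 := ⟨j - 1, by omega⟩
    rw [hψsucc]
    exact hg2 (ψ j') (L j').toFinset (ψ i) (List.mem_toFinset.2 (hmem i j' (by omega)))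
  refine ⟨ε, hε, ψ, hmono, ?_⟩
  intro i j hij
  rcases Nat.lt_or_ge i j with h | h
  · rw [dist_comm]; exact hsep i j h
  · exact hsep j i (by omega)

/-- Continuity of the midpoint map in a strictly `∞`-convex, nearly uniformly convex,
complete metric space. -/
lemma mid_continuous [CompleteSpace X]
    (hU : ∀ x y m m' : X, IsMidpoint x y m → IsMidpoint x y m' → m = m')
    (hC : ∀ x y z m : X, IsMidpoint x y m → dist m z ≤ max (dist x z) (dist y z))
    (h2 : NearlyUniformlyConvex X) :
    Continuous (fun p : X × X => M p.1 p.2) := by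
  rw [continuous_iff_seqContinuous]
  intro p q hpq
  have hx : Filter.Tendsto (fun n => (p n).1) Filter.atTop (𝓝 q.1) :=
    (continuous_fst.tendsto q).comp hpq
  have hy : Filter.Tendsto (fun n => (p n).2) Filter.atTop (𝓝 q.2) :=
    (continuous_snd.tendsto q).comp hpq
  set x : ℕ → X := fun n => (p n).1
  set y : ℕ → X := fun n => (p n).2
  set m : ℕ → X := fun n => M (x n) (y n) with hm
  show Filter.Tendsto m Filter.atTop (𝓝 (M q.1 q.2))
  -- key distance facts
  have hdb : ∀ n, dist (m n) q.1 ≤ dist (x n) (y n) / 2 + dist (x n) q.1 := by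
    intro n
    calc dist (m n) q.1 ≤ dist (m n) (x n) + dist (x n) q.1 := dist_triangle _ _ _
      _ = dist (x n) (y n) / 2 + dist (x n) q.1 := by
          rw [dist_comm (m n) (x n), (hM (x n) (y n)).1]
  have hdb' : ∀ n, dist (m n) q.2 ≤ dist (x n) (y n) / 2 + dist (y n) q.2 := by
    intro n
    calc dist (m n) q.2 ≤ dist (m n) (y n) + dist (y n) q.2 := dist_triangle _ _ _
      _ = dist (x n) (y n) / 2 + dist (y n) q.2 := by
          rw [dist_comm (m n) (y n), (hM (x n) (y n)).2]
  have hdxy : Filter.Tendsto (fun n => dist (x n) (y n)) Filter.atTop (𝓝 (dist q.1 q.2)) :=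
    hx.dist hy
  have hdx : Filter.Tendsto (fun n => dist (x n) q.1) Filter.atTop (𝓝 0) := by
    simpa [dist_self] using hx.dist (tendsto_const_nhds (x := q.1))
  have hdy : Filter.Tendsto (fun n => dist (y n) q.2) Filter.atTop (𝓝 0) := by
    simpa [dist_self] using hy.dist (tendsto_const_nhds (x := q.2))
  by_cases hqq : q.1 = q.2
  -- degenerate case: the two limit points coincide
  · have hMq : M q.1 q.2 = q.1 := by
      have hq0 : dist q.1 q.2 = 0 := by rw [hqq, dist_self]
      have h0 : dist q.1 (M q.1 q.2) = 0 := by rw [(hM q.1 q.2).1, hq0]; norm_num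
      exact (dist_eq_zero.1 h0).symm
    rw [hMq, tendsto_iff_dist_tendsto_zero]
    apply squeeze_zero (fun n => dist_nonneg) hdb
    have : Filter.Tendsto (fun n => dist (x n) (y n) / 2 + dist (x n) q.1)
        Filter.atTop (𝓝 (dist q.1 q.2 / 2 + 0)) := (hdxy.div_const 2).add hdx
    rw [← hqq, dist_self] at this
    simpa using this
  -- main case
  · have hd : 0 < dist q.1 q.2 := dist_pos.2 hqq
    set d : ℝ := dist q.1 q.2 with hdd
    by_contra hcon
    rw [Metric.tendsto_atTop] at hcon
    push_neg at hcon
    obtain ⟨ε₀, hε₀, hfreq⟩ := hcon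
    obtain ⟨φ, hφmono, hφ⟩ := Nat.exists_strictMono_subsequence
      (P := fun n => ε₀ ≤ dist (m n) (M q.1 q.2)) (by
        intro N
        obtain ⟨n, hn1, hn2⟩ := hfreq (N+1)
        exact ⟨n, by omega, hn2⟩)
  -- the subsequence v stays ε₀-away from the midpoint
    set v : ℕ → X := fun k => m (φ k) with hv
    by_cases htb : TotallyBounded (Set.range v)
    · -- totally bounded: extract a convergent subsequence, limit is a midpoint
      have hcomp : IsCompact (closure (Set.range v)) :=
        TotallyBounded.isCompact_of_isClosed htb.closure isClosed_closure
      obtain ⟨a, _, ψ, hψmono, hva⟩ := hcomp.tendsto_subseq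
        (x := v) (fun n => subset_closure (Set.mem_range_self n))
      have hφψ : Filter.Tendsto (fun k => φ (ψ k)) Filter.atTop Filter.atTop :=
        (hφmono.comp hψmono).tendsto_atTop
      have hxc : Filter.Tendsto (fun k => x (φ (ψ k))) Filter.atTop (𝓝 q.1) := hx.comp hφψ
      have hyc : Filter.Tendsto (fun k => y (φ (ψ k))) Filter.atTop (𝓝 q.2) := hy.comp hφψ
      have ha : IsMidpoint q.1 q.2 a := by
        constructor
        · have e1 : Filter.Tendsto (fun k => dist (x (φ (ψ k))) (v (ψ k)))
              Filter.atTop (𝓝 (dist q.1 a)) := hxc.dist hva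
          have e2 : Filter.Tendsto (fun k => dist (x (φ (ψ k))) (v (ψ k)))
              Filter.atTop (𝓝 (dist q.1 q.2 / 2)) := by
            have : (fun k => dist (x (φ (ψ k))) (v (ψ k)))
                = fun k => dist (x (φ (ψ k))) (y (φ (ψ k))) / 2 := by
              funext k; exact (hM (x (φ (ψ k))) (y (φ (ψ k)))).1
            rw [this]
            exact (hxc.dist hyc).div_const 2
          exact tendsto_nhds_unique e1 e2
        · have e1 : Filter.Tendsto (fun k => dist (y (φ (ψ k))) (v (ψ k)))
              Filter.atTop (𝓝 (dist q.2 a)) := hyc.dist hva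
          have e2 : Filter.Tendsto (fun k => dist (y (φ (ψ k))) (v (ψ k)))
              Filter.atTop (𝓝 (dist q.1 q.2 / 2)) := by
            have : (fun k => dist (y (φ (ψ k))) (v (ψ k)))
                = fun k => dist (x (φ (ψ k))) (y (φ (ψ k))) / 2 := by
              funext k; exact (hM (x (φ (ψ k))) (y (φ (ψ k)))).2
            rw [this]
            exact (hxc.dist hyc).div_const 2
          exact tendsto_nhds_unique e1 e2
      have haM : a = M q.1 q.2 := hU q.1 q.2 a (M q.1 q.2) ha (hM q.1 q.2)
      have : ε₀ ≤ dist a (M q.1 q.2) := by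
        have e3 : Filter.Tendsto (fun k => dist (v (ψ k)) (M q.1 q.2))
            Filter.atTop (𝓝 (dist a (M q.1 q.2))) := hva.dist tendsto_const_nhds
        exact le_of_tendsto_of_tendsto' tendsto_const_nhds e3 (fun k => hφ (ψ k))
      rw [haM, dist_self] at this
      linarith
    · -- not totally bounded: extract a separated subsequence and contradict NUC
      obtain ⟨δ, hδ, ψ, hψmono, hψsep⟩ := exists_separated_subseq v htb
      obtain ⟨ρ, hρ, hmod⟩ := h2.2 d hd δ hδ
      set η : ℝ := min (ρ * d / 8) (d / 2) with hη
      have hη0 : 0 < η := lt_min (by positivity) (by positivity)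
      -- eventually the subsequence lies in small balls around q.1 and q.2
      have hb1 : ∀ᶠ k in Filter.atTop, dist (v k) q.1 ≤ d / 2 + η := by
        have hlim : Filter.Tendsto (fun k => dist (x (φ k)) (y (φ k)) / 2 + dist (x (φ k)) q.1)
            Filter.atTop (𝓝 (d / 2 + 0)) :=
          ((hdxy.comp hφmono.tendsto_atTop).div_const 2).add (hdx.comp hφmono.tendsto_atTop)
        have hev := hlim.eventually_le_const (show d / 2 + 0 < d / 2 + η by linarith)
        filter_upwards [hev] with k hk
        exact le_trans (hdb (φ k)) (by linarith)
      have hb2 : ∀ᶠ k in Filter.atTop, dist (v k) q.2 ≤ d / 2 + η := by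
        have hlim : Filter.Tendsto (fun k => dist (x (φ k)) (y (φ k)) / 2 + dist (y (φ k)) q.2)
            Filter.atTop (𝓝 (d / 2 + 0)) :=
          ((hdxy.comp hφmono.tendsto_atTop).div_const 2).add (hdy.comp hφmono.tendsto_atTop)
        have hev := hlim.eventually_le_const (show d / 2 + 0 < d / 2 + η by linarith)
        filter_upwards [hev] with k hk
        exact le_trans (hdb' (φ k)) (by linarith)
      obtain ⟨N, hN⟩ := Filter.eventually_atTop.1 (hb1.and hb2)
      set fam : ℕ → X := fun i => v (ψ (i + N)) with hfam
      have hfamsep : ∀ i j : ℕ, i ≠ j → δ ≤ dist (fam i) (fam j) := by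
        intro i j hij
        exact hψsep (i+N) (j+N) (by omega)
      have hfamball : ∀ i, dist (fam i) q.1 ≤ d / 2 + η := by
        intro i
        exact (hN (ψ (i+N)) (le_trans (by omega) (hψmono.le_apply))).1
      have hfamball2 : ∀ i, dist (fam i) q.2 ≤ d / 2 + η := by
        intro i
        exact (hN (ψ (i+N)) (le_trans (by omega) (hψmono.le_apply))).2
      have hrR : d / 2 + η ≤ d := by
        have : η ≤ d / 2 := min_le_right _ _
        linarith
      obtain ⟨w, hw1, hw2⟩ := hmod ℕ fam q.1 (d / 2 + η) hrR hfamsep hfamball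
      rw [Metric.mem_closedBall] at hw1
      -- every point of the closed convex hull is within d/2+η of q.2
      have hw2' : dist w q.2 ≤ d / 2 + η := by
        have hball : GConvex (Metric.closedBall q.2 (d / 2 + η)) := gconvex_closedBall hC _ _
        have hsub : closure (gConvexHull (Set.range fam)) ⊆ Metric.closedBall q.2 (d / 2 + η) := by
          apply closure_minimal ?_ Metric.isClosed_closedBall
          apply gConvexHull_subset hball
          rintro _ ⟨i, rfl⟩
          rw [Metric.mem_closedBall]
          exact hfamball2 i
        exact Metric.mem_closedBall.1 (hsub hw2)
      -- contradiction
      have htri : d ≤ dist q.1 w + dist w q.2 := dist_triangle q.1 w q.2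
      have hηle : η ≤ ρ * d / 8 := min_le_left _ _
      rw [dist_comm w q.1] at hw1
      nlinarith [hw1, hw2', htri, hη0, hd, hρ]

omit hM in
lemma midSeq_cont (hMc : Continuous (fun p : X × X => M p.1 p.2)) :
    ∀ (n : ℕ) (t : ℝ), Continuous (fun p : X × X => midSeq M n t p.1 p.2) := by
  intro n
  induction n with
  | zero => intro t; exact continuous_fst
  | succ n ih =>
    intro t
    simp only [midSeq_succ]
    split_ifs with h
    · exact (ih (2*t)).comp (continuous_fst.prodMk hMc)
    · exact (ih (2*t-1)).comp (hMc.prodMk continuous_snd)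

end AuxProof
/-- Every complete, strictly `∞`-convex, nearly uniformly convex metric space
is contractible. -/
theorem strictly_nuc_contractible (X : Type) [MetricSpace X] [CompleteSpace X] [Nonempty X]
    (h1 : StrictlyInftyConvex X) (h2 : NearlyUniformlyConvex X) :
    ContractibleSpace X := by
  obtain ⟨hAM, hstrict⟩ := h1
  have hC : ∀ x y z m : X, IsMidpoint x y m → dist m z ≤ max (dist x z) (dist y z) := h2.1.2
  obtain ⟨M, hM⟩ : ∃ M : X → X → X, ∀ a b : X, IsMidpoint a b (M a b) :=
    ⟨fun a b => (hAM a b).choose, fun a b => (hAM a b).choose_spec⟩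
  have hU : ∀ x y m m' : X, IsMidpoint x y m → IsMidpoint x y m' → m = m' :=
    fun x y m m' hm hm' => isMidpoint_unique hAM hstrict hm hm'
  have hMc := mid_continuous hM hU hC h2
  obtain ⟨o⟩ := ‹Nonempty X›
  have hhalf : Filter.Tendsto (fun n : ℕ => (1/2 : ℝ)^n) Filter.atTop (𝓝 0) :=
    tendsto_pow_atTop_nhds_zero_of_lt_one (by norm_num) (by norm_num)
  obtain ⟨G, hG⟩ : ∃ G : ℝ → X → X, ∀ t x,
      Filter.Tendsto (fun n => midSeq M n t o x) Filter.atTop (𝓝 (G t x)) := by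
    have h := fun (t : ℝ) (x : X) => cauchySeq_tendsto_of_complete (midSeq_cauchy hM t o x)
    choose G hG using h
    exact ⟨G, hG⟩
  have hG0 : ∀ x, G 0 x = o := by
    intro x
    refine tendsto_nhds_unique (hG 0 x) ?_
    have : (fun n => midSeq M n 0 o x) = fun _ => o :=
      funext fun n => midSeq_param_zero hM n o x
    rw [this]
    exact tendsto_const_nhds
  have hG1 : ∀ x, G 1 x = x := by
    intro x
    refine tendsto_nhds_unique (hG 1 x) ?_
    rw [tendsto_iff_dist_tendsto_zero]
    apply squeeze_zero (fun n => dist_nonneg) (g := fun n => (1/2 : ℝ)^n * dist o x)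
    · intro n
      have := midSeq_dist_right hM n 1 o x (by norm_num) le_rfl
      calc dist (midSeq M n 1 o x) x ≤ (1 - 1 + (1/2)^n) * dist o x := this
        _ = (1/2)^n * dist o x := by ring
    · simpa using hhalf.mul_const (dist o x)
  have hGlip : ∀ t s : ℝ, 0 ≤ t → t ≤ 1 → 0 ≤ s → s ≤ 1 → ∀ x,
      dist (G t x) (G s x) ≤ |s - t| * dist o x := by
    intro t s ht0 ht1 hs0 hs1 x
    have hb : Filter.Tendsto (fun n => (|s - t| + (1/2 : ℝ)^n) * dist o x)
        Filter.atTop (𝓝 (|s - t| * dist o x)) := by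
      simpa using (tendsto_const_nhds.add hhalf).mul_const (dist o x)
    refine le_of_tendsto_of_tendsto' ((hG t x).dist (hG s x)) hb ?_
    intro n
    exact midSeq_dist_param hM n t s o x ht0 ht1 hs0 hs1
  have happrox : ∀ (n : ℕ) (t : ℝ) (x : X),
      dist (midSeq M n t o x) (G t x) ≤ (1/2 : ℝ)^n * dist o x := by
    intro n t x
    refine le_of_tendsto (tendsto_const_nhds.dist (hG t x)) ?_
    rw [Filter.eventually_atTop]
    refine ⟨n, fun m hm => ?_⟩
    calc dist (midSeq M n t o x) (midSeq M m t o x) ≤ ((1/2)^n - (1/2)^m) * dist o x :=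
          midSeq_dist_of_le hM t o x hm
      _ ≤ (1/2)^n * dist o x := by
          nlinarith [dist_nonneg (x := o) (y := x), pow_nonneg (by norm_num : (0:ℝ) ≤ 1/2) m]
  -- joint continuity of the contraction
  have hcont : Continuous (fun pr : (unitInterval × X) => G (1 - (pr.1 : ℝ)) pr.2) := by
    rw [Metric.continuous_iff]
    rintro ⟨τ₀, x₀⟩ ε hε
    set t₀ : ℝ := 1 - (τ₀ : ℝ) with ht₀
    have ht₀0 : 0 ≤ t₀ := by have := τ₀.2.2; simp only [ht₀]; linarith
    have ht₀1 : t₀ ≤ 1 := by have := τ₀.2.1; simp only [ht₀]; linarith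
    set D : ℝ := dist o x₀ + 1 with hD
    have hD0 : 0 < D := by have := dist_nonneg (x := o) (y := x₀); linarith
    obtain ⟨n, hn⟩ : ∃ n : ℕ, (1/2 : ℝ)^n * (2*D) < ε/3 := by
      obtain ⟨n, hn⟩ := exists_pow_lt_of_lt_one (show (0:ℝ) < (ε/3) / (2*D) by positivity)
        (by norm_num : (1/2 : ℝ) < 1)
      refine ⟨n, ?_⟩
      have := (lt_div_iff₀ (show (0:ℝ) < 2*D by linarith)).1 hn
      linarith
    have hgc : Continuous (fun x : X => midSeq M n t₀ o x) :=
      (midSeq_cont hMc n t₀).comp (Continuous.prodMk continuous_const continuous_id)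
    obtain ⟨δ₂, hδ₂, hg₂⟩ := Metric.continuous_iff.1 hgc x₀ (ε/3) (by positivity)
    refine ⟨min 1 (min δ₂ (ε/(3*D))), by positivity, ?_⟩
    rintro ⟨τ, x⟩ hdist
    rw [Prod.dist_eq, max_lt_iff] at hdist
    obtain ⟨hτ, hx⟩ := hdist
    have hτ1 : dist (τ : ℝ) (τ₀ : ℝ) < ε/(3*D) :=
      lt_of_lt_of_le (by exact_mod_cast hτ) (le_trans (min_le_right _ _) (min_le_right _ _))
    have hx2 : dist x x₀ < δ₂ :=
      lt_of_lt_of_le hx (le_trans (min_le_right _ _) (min_le_left _ _))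
    have hx1 : dist x x₀ < 1 := lt_of_lt_of_le hx (min_le_left _ _)
    set t : ℝ := 1 - (τ : ℝ) with ht
    have ht0 : 0 ≤ t := by have := τ.2.2; simp only [ht]; linarith
    have ht1 : t ≤ 1 := by have := τ.2.1; simp only [ht]; linarith
    have hox : dist o x ≤ D := by
      calc dist o x ≤ dist o x₀ + dist x₀ x := dist_triangle _ _ _
        _ ≤ dist o x₀ + 1 := by rw [dist_comm x₀ x]; linarith
    have hox₀ : dist o x₀ ≤ D := by simp only [hD]; linarith
    have habs : |t₀ - t| = dist (τ : ℝ) (τ₀ : ℝ) := by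
      rw [Real.dist_eq, ht, ht₀]
      rw [show (1 - (τ₀:ℝ)) - (1 - (τ:ℝ)) = (τ:ℝ) - (τ₀:ℝ) by ring]
    have term1 : dist (G t x) (G t₀ x) ≤ dist (τ : ℝ) (τ₀ : ℝ) * D := by
      calc dist (G t x) (G t₀ x) ≤ |t₀ - t| * dist o x := hGlip t t₀ ht0 ht1 ht₀0 ht₀1 x
        _ ≤ dist (τ : ℝ) (τ₀ : ℝ) * D := by
            rw [habs]
            exact mul_le_mul le_rfl hox dist_nonneg dist_nonneg
    have term1' : dist (τ : ℝ) (τ₀ : ℝ) * D < ε/3 := by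
      calc dist (τ : ℝ) (τ₀ : ℝ) * D < (ε/(3*D)) * D := by
            exact mul_lt_mul_of_pos_right hτ1 hD0
        _ = ε/3 := by field_simp
    have term2a : dist (G t₀ x) (midSeq M n t₀ o x) ≤ (1/2)^n * D := by
      rw [dist_comm]
      exact le_trans (happrox n t₀ x) (mul_le_mul le_rfl hox dist_nonneg (by positivity))
    have term2b : dist (midSeq M n t₀ o x) (midSeq M n t₀ o x₀) < ε/3 := hg₂ x hx2
    have term2c : dist (midSeq M n t₀ o x₀) (G t₀ x₀) ≤ (1/2)^n * D :=
      le_trans (happrox n t₀ x₀) (mul_le_mul le_rfl hox₀ dist_nonneg (by positivity))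
    calc dist (G t x) (G t₀ x₀)
        ≤ dist (G t x) (G t₀ x) + dist (G t₀ x) (G t₀ x₀) := dist_triangle _ _ _
      _ ≤ dist (G t x) (G t₀ x) + (dist (G t₀ x) (midSeq M n t₀ o x)
          + dist (midSeq M n t₀ o x) (midSeq M n t₀ o x₀)
          + dist (midSeq M n t₀ o x₀) (G t₀ x₀)) := by
          refine add_le_add le_rfl ?_
          calc dist (G t₀ x) (G t₀ x₀) ≤ dist (G t₀ x) (midSeq M n t₀ o x₀)
                + dist (midSeq M n t₀ o x₀) (G t₀ x₀) := dist_triangle _ _ _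
            _ ≤ dist (G t₀ x) (midSeq M n t₀ o x)
                + dist (midSeq M n t₀ o x) (midSeq M n t₀ o x₀)
                + dist (midSeq M n t₀ o x₀) (G t₀ x₀) := by
                linarith [dist_triangle (G t₀ x) (midSeq M n t₀ o x) (midSeq M n t₀ o x₀)]
      _ < ε := by
          have hD2 : (1/2:ℝ)^n * (2*D) = (1/2:ℝ)^n * D + (1/2:ℝ)^n * D := by ring
          rw [hD2] at hn
          have b1 : dist (G t x) (G t₀ x) < ε/3 := lt_of_le_of_lt term1 term1'
          have b2 : dist (G t₀ x) (midSeq M n t₀ o x)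
              + dist (midSeq M n t₀ o x₀) (G t₀ x₀) < ε/3 := by linarith [term2a, term2c, hn]
          linarith [b1, b2, term2b]
  rw [contractible_iff_id_nullhomotopic]
  refine ⟨o, ⟨⟨⟨fun pr => G (1 - (pr.1 : ℝ)) pr.2, hcont⟩, ?_, ?_⟩⟩⟩
  · intro x
    simp [hG1]
  · intro x
    simp [hG0]
end
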